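/- Let n ∈ ℕ, P ⊆ [n] × [n], and let V = {Σ_{(i,j)∈P} ω_{ij} E_{ij} : ω_{ij} ≥ 0} be the cone of entrywise-nonnegative n×n matrices supported on P. Let ψ : V → ℝ be convex and positively homogeneous, and for given real numbers α_1, …, α_{n²} define f : V → ℝ by f(A) = Σ_{i=1}^{n²} α_i A_{↓i}, where A_{↓1} ≥ ⋯ ≥ A_{↓n²} is the decreasing rearrangement of all entries of A. Then the following are equivalent: (1) ψ(A) ≤ f(A) for every A ∈ V; (2) ψ(A) ≤ f(A) for every A ∈ V all of whose entries lie in {0, 1}. -/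

import Mathlib

/-- The `j`-th largest entry of the tuple `x` (indices starting from `0`,
so `downOrd x 0` is the largest entry). -/
noncomputable def downOrd {p : ℕ} (x : Fin p → ℝ) (j : Fin p) : ℝ :=
  x (Tuple.sort x j.rev)

/-- All `n²` entries of a matrix, listed as a tuple indexed by `Fin (n * n)`. -/
def entriesVec {n : ℕ} (A : Matrix (Fin n) (Fin n) ℝ) : Fin (n * n) → ℝ :=
  fun k => A (finProdFinEquiv.symm k).1 (finProdFinEquiv.symm k).2

lemma downOrd_comp_perm {p : ℕ} (x : Fin p → ℝ) (σ : Equiv.Perm (Fin p)) (j : Fin p) :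
    downOrd (x ∘ σ) j = downOrd x j :=
  congrFun (Tuple.comp_perm_comp_sort_eq_comp_sort (σ := σ) (f := x)) j.rev

lemma downOrd_antitone {p : ℕ} (x : Fin p → ℝ) : Antitone (downOrd x) := by
  intro i j hij
  exact Tuple.monotone_sort x (Fin.rev_le_rev.mpr hij)

lemma downOrd_of_antitone {p : ℕ} (x : Fin p → ℝ) (h : Antitone x) :
    downOrd x = x := by
  funext j
  have hm : Monotone (x ∘ (Fin.revPerm : Equiv.Perm (Fin p))) := by
    intro a b hab
    exact h (Fin.rev_le_rev.mpr hab)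
  have h2 := (Tuple.comp_sort_eq_comp_iff_monotone (σ := Fin.revPerm)).mpr hm
  have := congrFun h2.symm j.rev
  simpa [downOrd, Fin.rev_rev] using this

lemma cone_jensen {M : Type*} [AddCommGroup M] [Module ℝ M] {V : Set M}
    (hadd : ∀ A ∈ V, ∀ B ∈ V, A + B ∈ V)
    (hsmul : ∀ (c : ℝ), 0 ≤ c → ∀ A ∈ V, c • A ∈ V)
    (h0 : (0 : M) ∈ V)
    {ψ : M → ℝ} (hconv : ConvexOn ℝ V ψ)
    (hhom : ∀ a : ℝ, 0 < a → ∀ A ∈ V, ψ (a • A) = a * ψ A)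
    {ι : Type*} [DecidableEq ι] (S : Finset ι) (c : ι → ℝ) (B : ι → M)
    (hc : ∀ k ∈ S, 0 < c k) (hB : ∀ k ∈ S, B k ∈ V) :
    (∑ k ∈ S, c k • B k) ∈ V ∧ ψ (∑ k ∈ S, c k • B k) ≤ ∑ k ∈ S, c k * ψ (B k) := by
  have hψ0 : ψ 0 = 0 := by
    have := hhom 2 (by norm_num) 0 h0
    rw [smul_zero] at this
    linarith
  have hsub : ∀ A ∈ V, ∀ B' ∈ V, ψ (A + B') ≤ ψ A + ψ B' := by
    intro A hA B' hB'
    have hmem : (1/2 : ℝ) • A + (1/2 : ℝ) • B' ∈ V :=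
      hadd _ (hsmul _ (by norm_num) _ hA) _ (hsmul _ (by norm_num) _ hB')
    have hcv := hconv.2 hA hB' (by norm_num : (0:ℝ) ≤ 1/2) (by norm_num : (0:ℝ) ≤ 1/2)
      (by norm_num)
    simp only [smul_eq_mul] at hcv
    have heq : A + B' = (2 : ℝ) • ((1/2 : ℝ) • A + (1/2 : ℝ) • B') := by
      rw [smul_add, smul_smul, smul_smul]; norm_num
    rw [heq, hhom 2 (by norm_num) _ hmem]
    linarith
  induction S using Finset.induction_on with
  | empty => simpa using ⟨h0, le_of_eq hψ0⟩
  | @insert a s hnot ih =>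
    have hc' : ∀ k ∈ s, 0 < c k := fun k hk => hc k (Finset.mem_insert_of_mem hk)
    have hB' : ∀ k ∈ s, B k ∈ V := fun k hk => hB k (Finset.mem_insert_of_mem hk)
    obtain ⟨hmem, hle⟩ := ih hc' hB'
    have hca := hc a (Finset.mem_insert_self a s)
    have hBa := hB a (Finset.mem_insert_self a s)
    have hmem1 : c a • B a ∈ V := hsmul _ hca.le _ hBa
    rw [Finset.sum_insert hnot, Finset.sum_insert hnot]
    refine ⟨hadd _ hmem1 _ hmem, ?_⟩
    calc ψ (c a • B a + ∑ k ∈ s, c k • B k)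
        ≤ ψ (c a • B a) + ψ (∑ k ∈ s, c k • B k) := hsub _ hmem1 _ hmem
      _ ≤ c a * ψ (B a) + ∑ k ∈ s, c k * ψ (B k) := by
          rw [hhom _ hca _ hBa]; linarith

theorem matrix_convex_bound_iff_on_zero_one_matrices_entries {n : ℕ}
    (P : Finset (Fin n × Fin n))
    (V : Set (Matrix (Fin n) (Fin n) ℝ))
    (hV : V = {A | (∀ p : Fin n × Fin n, p ∉ P → A p.1 p.2 = 0) ∧
      ∀ i j, 0 ≤ A i j})
    (ψ : Matrix (Fin n) (Fin n) ℝ → ℝ)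
    (hψconv : ConvexOn ℝ V ψ)
    (hψhom : ∀ α : ℝ, 0 < α → ∀ A ∈ V, ψ (α • A) = α * ψ A)
    (α : Fin (n * n) → ℝ)
    (f : Matrix (Fin n) (Fin n) ℝ → ℝ)
    (hf : ∀ A, f A = ∑ i : Fin (n * n), α i * downOrd (entriesVec A) i) :
    (∀ A ∈ V, ψ A ≤ f A) ↔
      (∀ A ∈ V, (∀ i j, A i j = 0 ∨ A i j = 1) → ψ A ≤ f A) := by
  subst hV
  constructor
  · intro h A hA _
    exact h A hA
  · intro h01 A hA
    -- closure properties of the cone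
    have hadd : ∀ X ∈ {A : Matrix (Fin n) (Fin n) ℝ | (∀ p : Fin n × Fin n, p ∉ P → A p.1 p.2 = 0) ∧ ∀ i j, 0 ≤ A i j},
        ∀ Y ∈ {A : Matrix (Fin n) (Fin n) ℝ | (∀ p : Fin n × Fin n, p ∉ P → A p.1 p.2 = 0) ∧ ∀ i j, 0 ≤ A i j},
        X + Y ∈ {A : Matrix (Fin n) (Fin n) ℝ | (∀ p : Fin n × Fin n, p ∉ P → A p.1 p.2 = 0) ∧ ∀ i j, 0 ≤ A i j} := by
      intro X hX Y hY
      refine ⟨fun p hp => ?_, fun i j => ?_⟩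
      · simp [Matrix.add_apply, hX.1 p hp, hY.1 p hp]
      · simpa [Matrix.add_apply] using add_nonneg (hX.2 i j) (hY.2 i j)
    have hsmul : ∀ (c : ℝ), 0 ≤ c →
        ∀ X ∈ {A : Matrix (Fin n) (Fin n) ℝ | (∀ p : Fin n × Fin n, p ∉ P → A p.1 p.2 = 0) ∧ ∀ i j, 0 ≤ A i j},
        c • X ∈ {A : Matrix (Fin n) (Fin n) ℝ | (∀ p : Fin n × Fin n, p ∉ P → A p.1 p.2 = 0) ∧ ∀ i j, 0 ≤ A i j} := by
      intro c hc X hX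
      refine ⟨fun p hp => ?_, fun i j => ?_⟩
      · simp [Matrix.smul_apply, hX.1 p hp]
      · simpa [Matrix.smul_apply] using mul_nonneg hc (hX.2 i j)
    have h0 : (0 : Matrix (Fin n) (Fin n) ℝ) ∈
        {A : Matrix (Fin n) (Fin n) ℝ | (∀ p : Fin n × Fin n, p ∉ P → A p.1 p.2 = 0) ∧ ∀ i j, 0 ≤ A i j} := by
      exact ⟨fun p _ => rfl, fun i j => le_refl 0⟩
    set x : Fin (n * n) → ℝ := entriesVec A with hxdef
    set σ : Equiv.Perm (Fin (n * n)) := Tuple.sort x with hσdef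
    have hxnn : ∀ m, 0 ≤ x m := fun m => hA.2 _ _
    have hdnn : ∀ j, 0 ≤ downOrd x j := fun j => hxnn _
    -- the step sizes
    set D : ℕ → ℝ := fun k => if h : k < n * n then downOrd x ⟨k, h⟩ else 0 with hDdef
    have hDnn : ∀ k, 0 ≤ D k := by
      intro k
      by_cases h : k < n * n
      · simp only [hDdef, dif_pos h]; exact hdnn _
      · simp only [hDdef, dif_neg h]; exact le_refl 0
    have hDanti : Antitone D := by
      intro a b hab
      by_cases hb : b < n * n
      · have ha : a < n * n := lt_of_le_of_lt hab hb
        simp only [hDdef, dif_pos ha, dif_pos hb]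
        exact downOrd_antitone x (by exact hab)
      · simp only [hDdef, dif_neg hb]
        exact hDnn a
    have hDp : D (n * n) = 0 := by simp [hDdef]
    set d : Fin (n * n) → ℝ := fun k => D k - D ((k : ℕ) + 1) with hddef
    have hd0 : ∀ k, 0 ≤ d k := fun k => sub_nonneg.mpr (hDanti (Nat.le_succ _))
    -- the 0-1 layers
    set χ : Fin (n * n) → Fin (n * n) → ℝ :=
      fun k m => if (σ.symm m).rev ≤ k then 1 else 0 with hχdef
    set B : Fin (n * n) → Matrix (Fin n) (Fin n) ℝ :=
      fun k => Matrix.of (fun i j => χ k (finProdFinEquiv (i, j))) with hBdef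
    have hBapply : ∀ k i j, B k i j = χ k (finProdFinEquiv (i, j)) := fun _ _ _ => rfl
    have hentries : ∀ k, entriesVec (B k) = χ k := by
      intro k
      funext m
      show χ k (finProdFinEquiv ((finProdFinEquiv.symm m).1, (finProdFinEquiv.symm m).2)) = χ k m
      rw [Prod.mk.eta, Equiv.apply_symm_apply]
    have hdownχ : ∀ k i, downOrd (χ k) i = if i ≤ k then 1 else 0 := by
      intro k i
      have hcomp : χ k = (fun j : Fin (n * n) => if j ≤ k then (1:ℝ) else 0) ∘
          (σ.symm.trans (Fin.revPerm : Equiv.Perm (Fin (n * n)))) := rfl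
      have hanti : Antitone (fun j : Fin (n * n) => if j ≤ k then (1:ℝ) else 0) := by
        intro a b hab
        by_cases hb : b ≤ k
        · simp [hb, le_trans hab hb]
        · simp only [if_neg hb]
          by_cases ha : a ≤ k <;> simp [ha]
      rw [hcomp, downOrd_comp_perm, downOrd_of_antitone _ hanti]
    -- every entry of x equals some D value
    have hxval : ∀ m : Fin (n * n), x m = D ((σ.symm m).rev : ℕ) := by
      intro m
      have h1 : downOrd x ((σ.symm m).rev) = x m := by
        show x (σ ((σ.symm m).rev.rev)) = x m
        rw [Fin.rev_rev, Equiv.apply_symm_apply]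
      simp only [hDdef, dif_pos (((σ.symm m).rev).isLt)]
      rw [Fin.eta, h1]
    -- telescoping sum
    have htel : ∀ j : Fin (n * n), (∑ k : Fin (n * n), if j ≤ k then d k else 0) = D j := by
      intro j
      have h1 : (∑ k : Fin (n * n), if j ≤ k then d k else 0) =
          ∑ k ∈ Finset.range (n * n), (if (j : ℕ) ≤ k then D k - D (k + 1) else 0) := by
        rw [Finset.sum_range fun k => _]
        apply Finset.sum_congr rfl
        intro k _
        by_cases h : j ≤ k
        · rw [if_pos h, if_pos (Fin.le_def.mp h)]
        · rw [if_neg h, if_neg (fun hc => h (Fin.le_def.mpr hc))]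
      have h2 : (∑ k ∈ Finset.range (n * n), (if (j : ℕ) ≤ k then D k - D (k + 1) else 0)) =
          ∑ k ∈ Finset.Ico (j : ℕ) (n * n), (D k - D (k + 1)) := by
        rw [← Finset.sum_filter]
        apply Finset.sum_congr
        · ext k; simp [Finset.mem_filter, Finset.mem_Ico]; omega
        · intros; rfl
      have h3 : (∑ k ∈ Finset.Ico (j : ℕ) (n * n), (D k - D (k + 1))) = D j - D (n * n) := by
        rw [Finset.sum_Ico_eq_sub _ (le_of_lt j.isLt)]
        rw [Finset.sum_range_sub' D, Finset.sum_range_sub' D]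
        ring
      rw [h1, h2, h3, hDp, sub_zero]
    -- the support of the decomposition
    set S : Finset (Fin (n * n)) := Finset.univ.filter (fun k => d k ≠ 0) with hSdef
    -- A is the positive combination of the layers
    have hAsum : ∑ k ∈ S, d k • B k = A := by
      have hS : ∑ k ∈ S, d k • B k = ∑ k : Fin (n * n), d k • B k := by
        rw [hSdef]
        refine Finset.sum_filter_of_ne ?_
        intro k _ hk hdk
        exact hk (by rw [hdk, zero_smul])
      rw [hS]
      ext i j
      rw [Matrix.sum_apply]
      have : ∀ k, (d k • B k) i j = if (σ.symm (finProdFinEquiv (i, j))).rev ≤ k then d k else 0 := by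
        intro k
        rw [Matrix.smul_apply, hBapply, hχdef]
        by_cases h : (σ.symm (finProdFinEquiv (i, j))).rev ≤ k <;> simp [h]
      rw [Finset.sum_congr rfl (fun k _ => this k), htel]
      have : A i j = x (finProdFinEquiv (i, j)) := by
        show A i j = A (finProdFinEquiv.symm (finProdFinEquiv (i, j))).1
          (finProdFinEquiv.symm (finProdFinEquiv (i, j))).2
        rw [Equiv.symm_apply_apply]
      rw [this, hxval]
    -- layers with positive weight lie in the cone
    have hBmem : ∀ k ∈ S, B k ∈ {A : Matrix (Fin n) (Fin n) ℝ |
        (∀ p : Fin n × Fin n, p ∉ P → A p.1 p.2 = 0) ∧ ∀ i j, 0 ≤ A i j} := by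
      intro k hk
      have hdk : 0 < d k := by
        rcases lt_or_eq_of_le (hd0 k) with h | h
        · exact h
        · exact absurd h.symm (by simpa [hSdef] using hk)
      have hDk : 0 < D k := by
        have := hDnn ((k : ℕ) + 1)
        simp only [hddef] at hdk
        linarith
      refine ⟨fun p hp => ?_, fun i j => ?_⟩
      · rw [hBapply, hχdef]
        by_cases h : (σ.symm (finProdFinEquiv (p.1, p.2))).rev ≤ k
        · exfalso
          have hx0 : x (finProdFinEquiv (p.1, p.2)) = 0 := by
            show A (finProdFinEquiv.symm (finProdFinEquiv (p.1, p.2))).1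
              (finProdFinEquiv.symm (finProdFinEquiv (p.1, p.2))).2 = 0
            rw [Equiv.symm_apply_apply]
            exact hA.1 p hp
          have := hxval (finProdFinEquiv (p.1, p.2))
          rw [hx0] at this
          have hge : D k ≤ D ((σ.symm (finProdFinEquiv (p.1, p.2))).rev : ℕ) :=
            hDanti (Fin.le_def.mp h)
          linarith
        · simp [h]
      · rw [hBapply, hχdef]
        by_cases h : (σ.symm (finProdFinEquiv (i, j))).rev ≤ k <;> simp [h]
    -- layers are 0-1 matrices
    have hB01 : ∀ k, ∀ i j, B k i j = 0 ∨ B k i j = 1 := by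
      intro k i j
      rw [hBapply, hχdef]
      by_cases h : (σ.symm (finProdFinEquiv (i, j))).rev ≤ k
      · right; simp [h]
      · left; simp [h]
    -- value of f on layers
    have hfB : ∀ k, f (B k) = ∑ i : Fin (n * n), if i ≤ k then α i else 0 := by
      intro k
      rw [hf, ]
      apply Finset.sum_congr rfl
      intro i _
      rw [hentries, hdownχ]
      by_cases h : i ≤ k <;> simp [h]
    -- f A decomposes
    have hfA : f A = ∑ k : Fin (n * n), d k * f (B k) := by
      have h1 : ∀ k, d k * f (B k) = ∑ i : Fin (n * n), (if i ≤ k then α i * d k else 0) := by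
        intro k
        rw [hfB, Finset.mul_sum]
        apply Finset.sum_congr rfl
        intro i _
        by_cases h : i ≤ k <;> simp [h] <;> ring
      rw [Finset.sum_congr rfl (fun k _ => h1 k), Finset.sum_comm]
      rw [hf]
      apply Finset.sum_congr rfl
      intro i _
      have : (∑ k : Fin (n * n), if i ≤ k then α i * d k else 0) =
          α i * ∑ k : Fin (n * n), (if i ≤ k then d k else 0) := by
        rw [Finset.mul_sum]
        apply Finset.sum_congr rfl
        intro k _
        by_cases h : i ≤ k <;> simp [h]
      rw [this, htel]
      congr 1
      simp only [hDdef, dif_pos i.isLt, Fin.eta]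
      rfl
    -- put everything together
    have hSc : ∀ k ∈ S, 0 < d k := by
      intro k hk
      rcases lt_or_eq_of_le (hd0 k) with h | h
      · exact h
      · exact absurd h.symm (by simpa [hSdef] using hk)
    obtain ⟨_, hjen⟩ := cone_jensen hadd hsmul h0 hψconv hψhom S d B hSc hBmem
    rw [hAsum] at hjen
    have hstep : ∑ k ∈ S, d k * ψ (B k) ≤ ∑ k ∈ S, d k * f (B k) := by
      apply Finset.sum_le_sum
      intro k hk
      exact mul_le_mul_of_nonneg_left (h01 (B k) (hBmem k hk) (hB01 k)) (hSc k hk).le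
    have hfull : ∑ k ∈ S, d k * f (B k) = ∑ k : Fin (n * n), d k * f (B k) := by
      rw [hSdef]
      refine Finset.sum_filter_of_ne ?_
      intro k _ hk hdk
      exact hk (by rw [hdk, zero_mul])
    rw [hfA]
    calc ψ A ≤ ∑ k ∈ S, d k * ψ (B k) := hjen
      _ ≤ ∑ k ∈ S, d k * f (B k) := hstep
      _ = ∑ k : Fin (n * n), d k * f (B k) := hfull
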